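/- Let π : Y → M be a continuous surjection between topological spaces that admits local continuous sections: every point of M has an open neighborhood U together with a continuous map s : U → Y with π ∘ s = id_U. Let V be a topological space and let E → Y be a locally trivial fiber bundle with fiber V. Suppose given a continuous isomorphism of fiber bundles φ : π₂*E → π₁*E over the fiber product Y^[2] = {(y₁, y₂) ∈ Y × Y : π(y₁) = π(y₂)} — i.e., for every (y₁, y₂) ∈ Y^[2] a homeomorphism φ_{(y₁,y₂)} : E_{y₂} → E_{y₁} of the fibers, depending continuously on (y₁, y₂) as a map of total spaces — such that over Y^[3] the cocycle condition φ_{(y₁,y₂)} ∘ φ_{(y₂,y₃)} = φ_{(y₁,y₃)} holds for all (y₁, y₂, y₃) with π(y₁) = π(y₂) = π(y₃). Then there exists a locally trivial fiber bundle Ẽ → M with fiber V and an isomorphism of fiber bundles E ≅ π*Ẽ over Y. -/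

import Mathlib

universe u v w z
set_option linter.unusedSectionVars false

section Descent

variable {Y : Type u} {M : Type v} {E : Type w} {V : Type z}
  [TopologicalSpace Y] [TopologicalSpace M] [TopologicalSpace E] [TopologicalSpace V]
  {π : Y → M} {pE : E → Y}

def dtr (φ : {q : {p : Y × Y // π p.1 = π p.2} × E // pE q.2 = q.1.1.2} ≃ₜ
         {q : {p : Y × Y // π p.1 = π p.2} × E // pE q.2 = q.1.1.1})
    (y : Y) (e : E) (h : π y = π (pE e)) : E :=
  (φ ⟨(⟨(y, pE e), h⟩, e), rfl⟩).1.2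

variable (φ : {q : {p : Y × Y // π p.1 = π p.2} × E // pE q.2 = q.1.1.2} ≃ₜ
         {q : {p : Y × Y // π p.1 = π p.2} × E // pE q.2 = q.1.1.1})

theorem dtr_congr_e {y : Y} {e e' : E} (hee : e = e') {h : π y = π (pE e)}
    {h' : π y = π (pE e')} : dtr φ y e h = dtr φ y e' h' := by
  subst hee; rfl

theorem dtr_congr_y {y y' : Y} (hyy : y = y') {e : E} {h : π y = π (pE e)}
    {h' : π y' = π (pE e)} : dtr φ y e h = dtr φ y' e h' := by
  subst hyy; rfl

theorem dtr_eq (y : Y) (e : E) (y₂ : Y) (he : pE e = y₂) (h : π y = π y₂) :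
    (φ ⟨(⟨(y, y₂), h⟩, e), he⟩).1.2 = dtr φ y e (by rw [he]; exact h) := by
  subst he; rfl

theorem dtr_continuous (hpE : Continuous pE) :
    Continuous (fun q : {q : Y × E // π q.1 = π (pE q.2)} => dtr φ q.1.1 q.1.2 q.2) := by
  have hG : Continuous (fun q : {q : Y × E // π q.1 = π (pE q.2)} =>
      (⟨(⟨(q.1.1, pE q.1.2), q.2⟩, q.1.2), rfl⟩ :
        {q : {p : Y × Y // π p.1 = π p.2} × E // pE q.2 = q.1.1.2})) := by
    apply Continuous.subtype_mk
    apply Continuous.prodMk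
    · apply Continuous.subtype_mk
      exact (continuous_fst.comp continuous_subtype_val).prodMk
        (hpE.comp (continuous_snd.comp continuous_subtype_val))
    · exact continuous_snd.comp continuous_subtype_val
  exact continuous_snd.comp (continuous_subtype_val.comp (φ.continuous.comp hG))

variable (hbase : ∀ q, (φ q).1.1 = q.1.1)

include hbase

theorem dtr_pE (y : Y) (e : E) (h : π y = π (pE e)) : pE (dtr φ y e h) = y := by
  have h2 := (φ ⟨(⟨(y, pE e), h⟩, e), rfl⟩).2
  rw [hbase] at h2
  exact h2

theorem dtr_inj {y : Y} {e e' : E} {h : π y = π (pE e)} {h' : π y = π (pE e')}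
    (hp : pE e = pE e') (heq : dtr φ y e h = dtr φ y e' h') : e = e' := by
  have h1 : (φ ⟨(⟨(y, pE e), h⟩, e), rfl⟩) = (φ ⟨(⟨(y, pE e'), h'⟩, e'), rfl⟩) := by
    apply Subtype.ext
    apply Prod.ext
    · rw [hbase, hbase]
      exact Subtype.ext (Prod.ext rfl hp)
    · exact heq
  have h2 := φ.toEquiv.injective h1
  exact congrArg (fun t => (Subtype.val t).2) h2

variable (hcoc' : ∀ (y₁ y₂ : Y) (e : E) (h₂ : π y₂ = π (pE e))
    (h₁ : π y₁ = π (pE (dtr φ y₂ e h₂))) (h' : π y₁ = π (pE e)),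
    dtr φ y₁ (dtr φ y₂ e h₂) h₁ = dtr φ y₁ e h')

include hcoc'

theorem dtr_self (e : E) (h : π (pE e) = π (pE e)) : dtr φ (pE e) e h = e := by
  have h1 : pE (dtr φ (pE e) e h) = pE e := dtr_pE φ hbase _ _ _
  have h2 : dtr φ (pE e) (dtr φ (pE e) e h) (by rw [h1]) = dtr φ (pE e) e h :=
    hcoc' (pE e) (pE e) e h _ h
  exact dtr_inj φ hbase h1 h2

omit hbase hcoc'

def drel : E → E → Prop := fun e₁ e₂ => ∃ h : π (pE e₁) = π (pE e₂), dtr φ (pE e₁) e₂ h = e₁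

include hbase hcoc'

theorem dtr_sound {e e' : E} (hr : drel φ e e') (y : Y) (h : π y = π (pE e))
    (h' : π y = π (pE e')) : dtr φ y e h = dtr φ y e' h' := by
  obtain ⟨h0, he⟩ := hr
  calc dtr φ y e h
      = dtr φ y (dtr φ (pE e) e' h0) (by rw [dtr_pE φ hbase]; exact h) := dtr_congr_e φ he.symm
    _ = dtr φ y e' h' := hcoc' _ _ _ _ _ _

theorem drel_refl (e : E) : drel φ e e :=
  ⟨rfl, dtr_self φ hbase hcoc' e rfl⟩

theorem drel_symm {e₁ e₂ : E} (h : drel φ e₁ e₂) : drel φ e₂ e₁ := by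
  obtain ⟨h12, he⟩ := h
  refine ⟨h12.symm, ?_⟩
  have step : dtr φ (pE e₂) (dtr φ (pE e₁) e₂ h12) (by rw [dtr_pE φ hbase]; exact h12.symm)
      = dtr φ (pE e₂) e₂ rfl := hcoc' _ _ _ _ _ rfl
  rw [dtr_self φ hbase hcoc' e₂ rfl] at step
  calc dtr φ (pE e₂) e₁ h12.symm
      = dtr φ (pE e₂) (dtr φ (pE e₁) e₂ h12) (by rw [dtr_pE φ hbase]; exact h12.symm) :=
        dtr_congr_e φ he.symm
    _ = e₂ := step

theorem drel_trans {e₁ e₂ e₃ : E} (h : drel φ e₁ e₂) (h' : drel φ e₂ e₃) : drel φ e₁ e₃ := by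
  obtain ⟨h12, he12⟩ := h
  obtain ⟨h23, he23⟩ := h'
  refine ⟨h12.trans h23, ?_⟩
  calc dtr φ (pE e₁) e₃ (h12.trans h23)
      = dtr φ (pE e₁) (dtr φ (pE e₂) e₃ h23) (by rw [dtr_pE φ hbase]; exact h12) :=
        (hcoc' _ _ _ _ _ _).symm
    _ = dtr φ (pE e₁) e₂ h12 := dtr_congr_e φ he23
    _ = e₁ := he12

omit hbase hcoc'

def dsetoid (hbase : ∀ q, (φ q).1.1 = q.1.1)
    (hcoc' : ∀ (y₁ y₂ : Y) (e : E) (h₂ : π y₂ = π (pE e))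
      (h₁ : π y₁ = π (pE (dtr φ y₂ e h₂))) (h' : π y₁ = π (pE e)),
      dtr φ y₁ (dtr φ y₂ e h₂) h₁ = dtr φ y₁ e h') : Setoid E :=
  ⟨drel φ, ⟨drel_refl φ hbase hcoc', drel_symm φ hbase hcoc', drel_trans φ hbase hcoc'⟩⟩

include hbase hcoc'

/-- The descended total space (at universe `w`). -/
def dQ : Type w := Quotient (dsetoid φ hbase hcoc')

instance : TopologicalSpace (dQ φ hbase hcoc') :=
  instTopologicalSpaceQuotient

def dk : E → dQ φ hbase hcoc' := fun e => Quotient.mk _ e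

def dpt : dQ φ hbase hcoc' → M :=
  Quotient.lift (fun e => π (pE e)) (fun _ _ h => by obtain ⟨h1, -⟩ := h; exact h1)

theorem dpt_dk (e : E) : dpt φ hbase hcoc' (dk φ hbase hcoc' e) = π (pE e) := rfl

theorem dk_out (x : dQ φ hbase hcoc') : dk φ hbase hcoc' (Quotient.out x) = x :=
  Quotient.out_eq x

theorem dpt_out (x : dQ φ hbase hcoc') :
    dpt φ hbase hcoc' x = π (pE (Quotient.out x)) := by
  conv_lhs => rw [← dk_out φ hbase hcoc' x]
  rfl


theorem dk_sound {e e' : E} (h : drel φ e e') :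
    dk φ hbase hcoc' e = dk φ hbase hcoc' e' := Quotient.sound h

theorem dk_exact {e e' : E} (h : dk φ hbase hcoc' e = dk φ hbase hcoc' e') : drel φ e e' :=
  Quotient.exact h

theorem out_rel (e : E) : drel φ (Quotient.out (dk φ hbase hcoc' e)) e :=
  dk_exact φ hbase hcoc' (dk_out φ hbase hcoc' (dk φ hbase hcoc' e))

theorem dk_continuous : Continuous (dk φ hbase hcoc') :=
  @continuous_quotient_mk' E _ (dsetoid φ hbase hcoc')

theorem dpt_continuous (hπ : Continuous π) (hpE : Continuous pE) :
    Continuous (dpt φ hbase hcoc') :=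
  Continuous.quotient_lift (hπ.comp hpE) _

theorem isOpen_of_dk_preimage {B : Set (dQ φ hbase hcoc')}
    (hB : IsOpen (dk φ hbase hcoc' ⁻¹' B)) : IsOpen B :=
  (@isQuotientMap_quotient_mk' E _ (dsetoid φ hbase hcoc')).isOpen_preimage.mp hB


/-! ### Local charts -/

variable (U : Set M) (s : U → Y) (W : Set Y)

omit hbase hcoc'

def lUv : Set M := {x : M | ∃ hx : x ∈ U, s ⟨x, hx⟩ ∈ W}

def lsp (x : M) (hx : x ∈ lUv U s W) : Y := s ⟨x, hx.choose⟩

theorem lsp_congr {x x' : M} (h : x = x') {hx : x ∈ lUv U s W} {hx' : x' ∈ lUv U s W} :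
    lsp U s W x hx = lsp U s W x' hx' := by subst h; rfl

theorem lsp_mem {x : M} {hx : x ∈ lUv U s W} : lsp U s W x hx ∈ W := hx.choose_spec

theorem lsp_pi (hsec' : ∀ u : U, π (s u) = (u : M)) (x : M) (hx : x ∈ lUv U s W) :
    π (lsp U s W x hx) = x := hsec' _

theorem lUv_isOpen (hU : IsOpen U) (hs : Continuous s) (hW : IsOpen W) :
    IsOpen (lUv U s W) := by
  have h1 : lUv U s W = Subtype.val '' (s ⁻¹' W) := by
    ext x
    constructor
    · rintro ⟨hx, hw⟩
      exact ⟨⟨x, hx⟩, hw, rfl⟩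
    · rintro ⟨⟨x', hx'⟩, hw, rfl⟩
      exact ⟨hx', hw⟩
  rw [h1]
  exact hU.isOpenMap_subtype_val _ (hW.preimage hs)

variable (hsec' : ∀ u : U, π (s u) = (u : M))

include hbase

def lT (e : {e : E // π (pE e) ∈ lUv U s W}) : E :=
  dtr φ (lsp U s W (π (pE e.1)) e.2) e.1 (lsp_pi U s W hsec' _ _)

theorem lT_pE (e : {e : E // π (pE e) ∈ lUv U s W}) :
    pE (lT φ U s W hsec' e) = lsp U s W (π (pE e.1)) e.2 := dtr_pE φ hbase _ _ _

theorem lT_mem (e : {e : E // π (pE e) ∈ lUv U s W}) :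
    pE (lT φ U s W hsec' e) ∈ W := by
  rw [lT_pE φ hbase]; exact lsp_mem U s W

theorem lT_rel (e : {e : E // π (pE e) ∈ lUv U s W}) : drel φ (lT φ U s W hsec' e) e.1 := by
  refine ⟨?_, ?_⟩
  · rw [lT_pE φ hbase, lsp_pi U s W hsec']
  · exact dtr_congr_y φ (lT_pE φ hbase U s W hsec' e)

theorem lT_sound (hcoc' : ∀ (y₁ y₂ : Y) (e : E) (h₂ : π y₂ = π (pE e))
      (h₁ : π y₁ = π (pE (dtr φ y₂ e h₂))) (h' : π y₁ = π (pE e)),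
      dtr φ y₁ (dtr φ y₂ e h₂) h₁ = dtr φ y₁ e h')
    {e e' : {e : E // π (pE e) ∈ lUv U s W}} (hr : drel φ e.1 e'.1) :
    lT φ U s W hsec' e = lT φ U s W hsec' e' := by
  have h0 : π (pE e.1) = π (pE e'.1) := hr.1
  calc lT φ U s W hsec' e
      = dtr φ (lsp U s W (π (pE e'.1)) e'.2) e.1
          (by rw [lsp_pi U s W hsec']; exact h0.symm) := dtr_congr_y φ (lsp_congr U s W h0)
    _ = lT φ U s W hsec' e' := dtr_sound φ hbase hcoc' hr _ _ _

theorem lT_continuous (hpE : Continuous pE) (hπ : Continuous π) (hs : Continuous s) :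
    Continuous (lT φ U s W hsec') := by
  have h1 : Continuous (fun e : {e : E // π (pE e) ∈ lUv U s W} =>
      (⟨(lsp U s W (π (pE e.1)) e.2, e.1), lsp_pi U s W hsec' (π (pE e.1)) e.2⟩ :
        {q : Y × E // π q.1 = π (pE q.2)})) := by
    apply Continuous.subtype_mk
    apply Continuous.prodMk
    · exact hs.comp (Continuous.subtype_mk
        (hπ.comp (hpE.comp continuous_subtype_val)) (fun e => e.2.choose))
    · exact continuous_subtype_val
  exact (dtr_continuous φ hpE).comp h1


variable (triv : (pE ⁻¹' W) ≃ₜ W × V)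

noncomputable def lv (e : {e : E // π (pE e) ∈ lUv U s W}) : V :=
  (triv ⟨lT φ U s W hsec' e, lT_mem φ hbase U s W hsec' e⟩).2

theorem lv_sound (hcoc' : ∀ (y₁ y₂ : Y) (e : E) (h₂ : π y₂ = π (pE e))
      (h₁ : π y₁ = π (pE (dtr φ y₂ e h₂))) (h' : π y₁ = π (pE e)),
      dtr φ y₁ (dtr φ y₂ e h₂) h₁ = dtr φ y₁ e h')
    {e e' : {e : E // π (pE e) ∈ lUv U s W}} (hr : drel φ e.1 e'.1) :
    lv φ hbase U s W hsec' triv e = lv φ hbase U s W hsec' triv e' :=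
  congrArg (fun t => (triv t).2) (Subtype.ext (lT_sound φ hbase U s W hsec' hcoc' hr))

theorem lv_continuous (hpE : Continuous pE) (hπ : Continuous π) (hs : Continuous s) :
    Continuous (lv φ hbase U s W hsec' triv) :=
  continuous_snd.comp (triv.continuous.comp
    (Continuous.subtype_mk (lT_continuous φ hbase U s W hsec' hpE hπ hs)
      (lT_mem φ hbase U s W hsec')))

include hcoc'

def lkS : {e : E // π (pE e) ∈ lUv U s W} → (dpt φ hbase hcoc' ⁻¹' lUv U s W) :=
  fun e => ⟨dk φ hbase hcoc' e.1, e.2⟩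

theorem lkS_isOpen (hU : IsOpen U) (hs : Continuous s) (hW : IsOpen W)
    (hπ : Continuous π) (hpE : Continuous pE)
    {A : Set (dpt φ hbase hcoc' ⁻¹' lUv U s W)}
    (hA : IsOpen (lkS φ hbase hcoc' U s W ⁻¹' A)) : IsOpen A := by
  set B : Set (dQ φ hbase hcoc') :=
    {x | ∃ hx : x ∈ dpt φ hbase hcoc' ⁻¹' lUv U s W, (⟨x, hx⟩ : _) ∈ A} with hB
  have hpre : dk φ hbase hcoc' ⁻¹' B = Subtype.val '' (lkS φ hbase hcoc' U s W ⁻¹' A) := by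
    ext e
    simp only [hB, Set.mem_preimage, Set.mem_image, Set.mem_setOf_eq]
    constructor
    · rintro ⟨hx, hmem⟩
      exact ⟨⟨e, hx⟩, hmem, rfl⟩
    · rintro ⟨⟨e', he'⟩, hmem, rfl⟩
      exact ⟨he', hmem⟩
  have hC : IsOpen (Subtype.val '' (lkS φ hbase hcoc' U s W ⁻¹' A)) := by
    have hopen : IsOpen {e : E | π (pE e) ∈ lUv U s W} :=
      (lUv_isOpen U s W hU hs hW).preimage (hπ.comp hpE)
    exact hopen.isOpenMap_subtype_val _ hA
  have hBopen : IsOpen B := isOpen_of_dk_preimage φ hbase hcoc' (by rw [hpre]; exact hC)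
  have hAB : A = Subtype.val ⁻¹' B := by
    ext x
    obtain ⟨xv, hx⟩ := x
    simp only [hB, Set.mem_preimage, Set.mem_setOf_eq]
    constructor
    · intro h
      exact ⟨hx, h⟩
    · rintro ⟨hx', h⟩
      exact h
  rw [hAB]
  exact hBopen.preimage continuous_subtype_val

noncomputable def lvbar : (dpt φ hbase hcoc' ⁻¹' lUv U s W) → V := fun x =>
  lv φ hbase U s W hsec' triv
    ⟨Quotient.out x.1, by rw [← dpt_out φ hbase hcoc' x.1]; exact x.2⟩

theorem lvbar_k (e : {e : E // π (pE e) ∈ lUv U s W}) :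
    lvbar φ hbase hcoc' U s W hsec' triv (lkS φ hbase hcoc' U s W e)
      = lv φ hbase U s W hsec' triv e :=
  lv_sound φ hbase U s W hsec' triv hcoc' (out_rel φ hbase hcoc' e.1)

theorem lvbar_continuous (hU : IsOpen U) (hs : Continuous s) (hW : IsOpen W)
    (hπ : Continuous π) (hpE : Continuous pE) :
    Continuous (lvbar φ hbase hcoc' U s W hsec' triv) := by
  rw [continuous_def]
  intro O hO
  apply lkS_isOpen φ hbase hcoc' U s W hU hs hW hπ hpE
  have h1 : lkS φ hbase hcoc' U s W ⁻¹' (lvbar φ hbase hcoc' U s W hsec' triv ⁻¹' O)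
      = lv φ hbase U s W hsec' triv ⁻¹' O := by
    ext e
    simp only [Set.mem_preimage]
    rw [lvbar_k φ hbase hcoc' U s W hsec' triv e]
  rw [h1]
  exact (lv_continuous φ hbase U s W hsec' triv hpE hπ hs).isOpen_preimage O hO


variable (htriv : ∀ q : pE ⁻¹' W, ((triv q).1 : Y) = pE (q : E))

omit hbase hcoc'

noncomputable def lρ0 (x : M) (hx : x ∈ lUv U s W) (v : V) : E :=
  ((triv.symm (⟨lsp U s W x hx, lsp_mem U s W⟩, v)) : E)

include htriv

theorem lρ0_pE (x : M) (hx : x ∈ lUv U s W) (v : V) :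
    pE (lρ0 U s W triv x hx v) = lsp U s W x hx := by
  have h1 := htriv (triv.symm (⟨lsp U s W x hx, lsp_mem U s W⟩, v))
  rw [Homeomorph.apply_symm_apply] at h1
  exact h1.symm

include hsec'

theorem lρ0_pi (x : M) (hx : x ∈ lUv U s W) (v : V) :
    π (pE (lρ0 U s W triv x hx v)) = x := by
  rw [lρ0_pE U s W triv htriv]
  exact lsp_pi U s W hsec' x hx

theorem lρ0_memUv (x : M) (hx : x ∈ lUv U s W) (v : V) :
    π (pE (lρ0 U s W triv x hx v)) ∈ lUv U s W := by
  rw [lρ0_pi U s W hsec' triv htriv]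
  exact hx

omit htriv

include hbase hcoc'

noncomputable def lρ (x : (dpt φ hbase hcoc' ⁻¹' lUv U s W)) : E :=
  lρ0 U s W triv (dpt φ hbase hcoc' x.1) x.2 (lvbar φ hbase hcoc' U s W hsec' triv x)

theorem lρ_continuous (hU : IsOpen U) (hs : Continuous s) (hW : IsOpen W)
    (hπ : Continuous π) (hpE : Continuous pE) :
    Continuous (lρ φ hbase hcoc' U s W hsec' triv) := by
  apply continuous_subtype_val.comp
  apply triv.symm.continuous.comp
  apply Continuous.prodMk
  · apply Continuous.subtype_mk
    exact hs.comp (Continuous.subtype_mk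
      ((dpt_continuous φ hbase hcoc' hπ hpE).comp continuous_subtype_val)
      (fun x => x.2.choose))
  · exact lvbar_continuous φ hbase hcoc' U s W hsec' triv hU hs hW hπ hpE

include htriv

theorem lρ_eq_lT (x : (dpt φ hbase hcoc' ⁻¹' lUv U s W)) :
    lρ φ hbase hcoc' U s W hsec' triv x
      = lT φ U s W hsec'
          ⟨Quotient.out x.1, by rw [← dpt_out φ hbase hcoc' x.1]; exact x.2⟩ := by
  set e0 : {e : E // π (pE e) ∈ lUv U s W} :=
    ⟨Quotient.out x.1, by rw [← dpt_out φ hbase hcoc' x.1]; exact x.2⟩ with he0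
  have h1 : triv ⟨lT φ U s W hsec' e0, lT_mem φ hbase U s W hsec' e0⟩
      = (⟨lsp U s W (dpt φ hbase hcoc' x.1) x.2, lsp_mem U s W⟩,
          lvbar φ hbase hcoc' U s W hsec' triv x) := by
    apply Prod.ext
    · apply Subtype.ext
      rw [htriv]
      rw [lT_pE φ hbase U s W hsec' e0]
      exact lsp_congr U s W (dpt_out φ hbase hcoc' x.1).symm (hx := e0.2) (hx' := x.2)
    · rfl
  have h2 := congrArg triv.symm h1
  rw [Homeomorph.symm_apply_apply] at h2
  exact (congrArg Subtype.val h2).symm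

theorem lρ_dk (x : (dpt φ hbase hcoc' ⁻¹' lUv U s W)) :
    dk φ hbase hcoc' (lρ φ hbase hcoc' U s W hsec' triv x) = x.1 := by
  rw [lρ_eq_lT φ hbase hcoc' U s W hsec' triv htriv x]
  exact (dk_sound φ hbase hcoc' (lT_rel φ hbase U s W hsec' _)).trans
    (dk_out φ hbase hcoc' x.1)

theorem lρ_pi (x : (dpt φ hbase hcoc' ⁻¹' lUv U s W)) :
    π (pE (lρ φ hbase hcoc' U s W hsec' triv x)) = dpt φ hbase hcoc' x.1 :=
  lρ0_pi U s W hsec' triv htriv _ _ _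

noncomputable def lθ (hU : IsOpen U) (hs : Continuous s) (hW : IsOpen W)
    (hπ : Continuous π) (hpE : Continuous pE) :
    (dpt φ hbase hcoc' ⁻¹' lUv U s W) ≃ₜ (lUv U s W) × V where
  toFun x := (⟨dpt φ hbase hcoc' x.1, x.2⟩, lvbar φ hbase hcoc' U s W hsec' triv x)
  invFun p := ⟨dk φ hbase hcoc' (lρ0 U s W triv p.1.1 p.1.2 p.2), by
    show dpt φ hbase hcoc' (dk φ hbase hcoc' _) ∈ lUv U s W
    rw [dpt_dk φ hbase hcoc', lρ0_pi U s W hsec' triv htriv]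
    exact p.1.2⟩
  left_inv x := Subtype.ext (lρ_dk φ hbase hcoc' U s W hsec' triv htriv x)
  right_inv p := by
    apply Prod.ext
    · apply Subtype.ext
      show dpt φ hbase hcoc' (dk φ hbase hcoc' _) = (p.1 : M)
      rw [dpt_dk φ hbase hcoc', lρ0_pi U s W hsec' triv htriv]
    · show lvbar φ hbase hcoc' U s W hsec' triv _ = p.2
      have he'mem : π (pE (lρ0 U s W triv p.1.1 p.1.2 p.2)) ∈ lUv U s W :=
        lρ0_memUv U s W hsec' triv htriv p.1.1 p.1.2 p.2
      have hstep : lvbar φ hbase hcoc' U s W hsec' triv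
          (lkS φ hbase hcoc' U s W ⟨lρ0 U s W triv p.1.1 p.1.2 p.2, he'mem⟩) = p.2 := by
        rw [lvbar_k φ hbase hcoc' U s W hsec' triv]
        have hlsp : lsp U s W (π (pE (lρ0 U s W triv p.1.1 p.1.2 p.2))) he'mem
            = pE (lρ0 U s W triv p.1.1 p.1.2 p.2) := by
          calc lsp U s W (π (pE (lρ0 U s W triv p.1.1 p.1.2 p.2))) he'mem
              = lsp U s W p.1.1 p.1.2 :=
                lsp_congr U s W (lρ0_pi U s W hsec' triv htriv p.1.1 p.1.2 p.2)
            _ = pE (lρ0 U s W triv p.1.1 p.1.2 p.2) :=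
                (lρ0_pE U s W triv htriv p.1.1 p.1.2 p.2).symm
        have h2 : lT φ U s W hsec' ⟨lρ0 U s W triv p.1.1 p.1.2 p.2, he'mem⟩
            = lρ0 U s W triv p.1.1 p.1.2 p.2 := by
          calc lT φ U s W hsec' ⟨lρ0 U s W triv p.1.1 p.1.2 p.2, he'mem⟩
              = dtr φ (pE (lρ0 U s W triv p.1.1 p.1.2 p.2))
                  (lρ0 U s W triv p.1.1 p.1.2 p.2) rfl := dtr_congr_y φ hlsp
            _ = lρ0 U s W triv p.1.1 p.1.2 p.2 :=
                dtr_self φ hbase hcoc' _ rfl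
        have hW' : pE (lρ0 U s W triv p.1.1 p.1.2 p.2) ∈ W := by
          rw [lρ0_pE U s W triv htriv]
          exact lsp_mem U s W
        have h3 : lv φ hbase U s W hsec' triv ⟨lρ0 U s W triv p.1.1 p.1.2 p.2, he'mem⟩
            = (triv ⟨lρ0 U s W triv p.1.1 p.1.2 p.2, hW'⟩).2 :=
          congrArg (fun t => (triv t).2) (Subtype.ext h2)
        have h4 : (⟨lρ0 U s W triv p.1.1 p.1.2 p.2, hW'⟩ : (pE ⁻¹' W))
            = triv.symm (⟨lsp U s W p.1.1 p.1.2, lsp_mem U s W⟩, p.2) := Subtype.ext rfl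
        rw [h3, h4, Homeomorph.apply_symm_apply]
      exact hstep
  continuous_toFun := by
    apply Continuous.prodMk
    · exact Continuous.subtype_mk
        ((dpt_continuous φ hbase hcoc' hπ hpE).comp continuous_subtype_val) (fun x => x.2)
    · exact lvbar_continuous φ hbase hcoc' U s W hsec' triv hU hs hW hπ hpE
  continuous_invFun := by
    apply Continuous.subtype_mk
    apply (dk_continuous φ hbase hcoc').comp
    apply continuous_subtype_val.comp
    apply triv.symm.continuous.comp
    apply Continuous.prodMk
    · apply Continuous.subtype_mk
      exact hs.comp (Continuous.subtype_mk
        (continuous_subtype_val.comp continuous_fst) (fun p => p.1.2.choose))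
    · exact continuous_snd

theorem lθ_fst (hU : IsOpen U) (hs : Continuous s) (hW : IsOpen W)
    (hπ : Continuous π) (hpE : Continuous pE)
    (q : (dpt φ hbase hcoc' ⁻¹' lUv U s W)) :
    ((lθ φ hbase hcoc' U s W hsec' triv htriv hU hs hW hπ hpE q).1 : M)
      = dpt φ hbase hcoc' q.1 := rfl


/-- Transfer of preimage subtypes along `ULift`. -/
def uliftPreimageHomeo {X : Type*} {M' : Type*} [TopologicalSpace X]
    (f : X → M') (Uv : Set M') :
    ((fun x : ULift.{z} X => f x.down) ⁻¹' Uv) ≃ₜ (f ⁻¹' Uv) where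
  toFun x := ⟨x.1.down, x.2⟩
  invFun y := ⟨ULift.up y.1, y.2⟩
  left_inv x := rfl
  right_inv y := rfl
  continuous_toFun :=
    Continuous.subtype_mk (continuous_uliftDown.comp continuous_subtype_val) (fun x => x.2)
  continuous_invFun :=
    Continuous.subtype_mk (continuous_uliftUp.comp continuous_subtype_val) (fun y => y.2)

end Descent

def IsLocTrivBundle {E X : Type*} [TopologicalSpace E] [TopologicalSpace X]
    (V : Type*) [TopologicalSpace V] (p : E → X) : Prop :=
  Continuous p ∧ ∀ x : X, ∃ U : Set X, IsOpen U ∧ x ∈ U ∧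
    ∃ e : (p ⁻¹' U) ≃ₜ U × V, ∀ q : p ⁻¹' U, ((e q).1 : X) = p (q : E)

theorem descent_of_fiber_bundle
    {Y : Type u} {M : Type v} {E : Type w} {V : Type z}
    [TopologicalSpace Y] [TopologicalSpace M] [TopologicalSpace E] [TopologicalSpace V]
    (π : Y → M) (hπ_cont : Continuous π) (hπ_surj : Function.Surjective π)
    (hsec : ∀ m : M, ∃ U : Set M, IsOpen U ∧ m ∈ U ∧
      ∃ s : U → Y, Continuous s ∧ ∀ u : U, π (s u) = (u : M))
    (pE : E → Y) (hE : IsLocTrivBundle V pE)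
    (φ : {q : {p : Y × Y // π p.1 = π p.2} × E // pE q.2 = q.1.1.2} ≃ₜ
         {q : {p : Y × Y // π p.1 = π p.2} × E // pE q.2 = q.1.1.1})
    (hbase : ∀ q, (φ q).1.1 = q.1.1)
    (hcoc : ∀ (y₁ y₂ y₃ : Y) (h12 : π y₁ = π y₂) (h23 : π y₂ = π y₃)
      (e : E) (he : pE e = y₃),
      (φ ⟨(⟨(y₁, y₂), h12⟩, (φ ⟨(⟨(y₂, y₃), h23⟩, e), he⟩).1.2), by
          have h := (φ ⟨(⟨(y₂, y₃), h23⟩, e), he⟩).2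
          rw [hbase] at h
          exact h⟩).1.2
      = (φ ⟨(⟨(y₁, y₃), h12.trans h23⟩, e), he⟩).1.2) :
    ∃ (Et : Type (max u v w z)) (_ : TopologicalSpace Et) (pt : Et → M),
      IsLocTrivBundle V pt ∧
      ∃ ψ : E ≃ₜ {q : Y × Et // pt q.2 = π q.1}, ∀ e : E, (ψ e).1.1 = pE e := by
  classical
  obtain ⟨hpE, hEloc⟩ := hE
  have hcoc' : ∀ (y₁ y₂ : Y) (e : E) (h₂ : π y₂ = π (pE e))
      (h₁ : π y₁ = π (pE (dtr φ y₂ e h₂))) (h' : π y₁ = π (pE e)),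
      dtr φ y₁ (dtr φ y₂ e h₂) h₁ = dtr φ y₁ e h' := by
    intro y₁ y₂ e h₂ h₁ h'
    have h12 : π y₁ = π y₂ := by rw [h₁, dtr_pE φ hbase]
    have H := hcoc y₁ y₂ (pE e) h12 h₂ e rfl
    have H' : (φ ⟨(⟨(y₁, y₂), h12⟩, dtr φ y₂ e h₂),
        dtr_pE φ hbase y₂ e h₂⟩).1.2 = dtr φ y₁ e h' := H
    rw [dtr_eq φ y₁ (dtr φ y₂ e h₂) y₂ (dtr_pE φ hbase y₂ e h₂) h12] at H'
    exact H'
  refine ⟨ULift.{max u v z} (dQ φ hbase hcoc'), inferInstance,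
    fun x => dpt φ hbase hcoc' x.down, And.intro ?_ ?_, ?_⟩
  · exact (dpt_continuous φ hbase hcoc' hπ_cont hpE).comp continuous_uliftDown
  · intro m
    obtain ⟨U, hUo, hmU, s, hs, hsec'⟩ := hsec m
    obtain ⟨W, hWo, hsmW, triv, htriv⟩ := hEloc (s ⟨m, hmU⟩)
    refine ⟨lUv U s W, lUv_isOpen U s W hUo hs hWo, ⟨hmU, hsmW⟩, ?_⟩
    refine ⟨(uliftPreimageHomeo (dpt φ hbase hcoc') (lUv U s W)).trans
      (lθ φ hbase hcoc' U s W hsec' triv htriv hUo hs hWo hπ_cont hpE), ?_⟩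
    intro q
    rfl
  · set f : E → {q : Y × ULift.{max u v z} (dQ φ hbase hcoc') //
        (fun x => dpt φ hbase hcoc' x.down) q.2 = π q.1} :=
      fun e => ⟨(pE e, ULift.up (dk φ hbase hcoc' e)), rfl⟩ with hfdef
    have hinj : Function.Injective f := by
      intro e e' h
      have h1 : pE e = pE e' := congrArg (fun t => (Subtype.val t).1) h
      have h2 : dk φ hbase hcoc' e = dk φ hbase hcoc' e' :=
        congrArg (fun t => ((Subtype.val t).2).down) h
      obtain ⟨hr, heq⟩ := dk_exact φ hbase hcoc' h2
      calc e = dtr φ (pE e) e' hr := heq.symm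
        _ = dtr φ (pE e') e' rfl := dtr_congr_y φ h1
        _ = e' := dtr_self φ hbase hcoc' e' rfl
    have hsurj : Function.Surjective f := by
      rintro ⟨⟨y, x⟩, hz⟩
      have h' : π y = π (pE (Quotient.out x.down)) := by
        rw [← dpt_out φ hbase hcoc' x.down]
        exact hz.symm
      refine ⟨dtr φ y (Quotient.out x.down) h', ?_⟩
      apply Subtype.ext
      apply Prod.ext
      · exact dtr_pE φ hbase _ _ _
      · show ULift.up (dk φ hbase hcoc' (dtr φ y (Quotient.out x.down) h')) = x
        have hdk : dk φ hbase hcoc' (dtr φ y (Quotient.out x.down) h') = x.down := by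
          have hrel : drel φ (dtr φ y (Quotient.out x.down) h') (Quotient.out x.down) :=
            ⟨by rw [dtr_pE φ hbase]; exact h', dtr_congr_y φ (dtr_pE φ hbase _ _ _)⟩
          rw [dk_sound φ hbase hcoc' hrel, dk_out φ hbase hcoc']
        rw [hdk]
    set F₀ := Equiv.ofBijective f ⟨hinj, hsurj⟩ with hF₀
    have hcont : Continuous f :=
      Continuous.subtype_mk
        (hpE.prodMk (continuous_uliftUp.comp (dk_continuous φ hbase hcoc'))) _
    have hcont_inv : Continuous F₀.symm := by
      rw [continuous_iff_continuousAt]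
      intro z
      obtain ⟨U, hUo, hmU, s, hs, hsec'⟩ := hsec (π z.1.1)
      obtain ⟨W, hWo, hsmW, triv, htriv⟩ := hEloc (s ⟨π z.1.1, hmU⟩)
      set O : Set {q : Y × ULift.{max u v z} (dQ φ hbase hcoc') //
          (fun x => dpt φ hbase hcoc' x.down) q.2 = π q.1} :=
        (fun z' => π z'.1.1) ⁻¹' (lUv U s W) with hOdef
      have hOopen : IsOpen O := by
        rw [hOdef]
        exact (lUv_isOpen U s W hUo hs hWo).preimage
          (hπ_cont.comp (continuous_fst.comp continuous_subtype_val))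
      have hzO : z ∈ O := by
        rw [hOdef]
        exact ⟨hmU, hsmW⟩
      have hOmem : ∀ z'' : {q : Y × ULift.{max u v z} (dQ φ hbase hcoc') //
          (fun x => dpt φ hbase hcoc' x.down) q.2 = π q.1},
          z'' ∈ O → z''.1.2.down ∈ dpt φ hbase hcoc' ⁻¹' lUv U s W := by
        intro z'' h
        rw [hOdef] at h
        show dpt φ hbase hcoc' z''.1.2.down ∈ lUv U s W
        have hh : dpt φ hbase hcoc' z''.1.2.down = π z''.1.1 := z''.2
        rw [hh]
        exact h
      set g : O → E := fun z' =>
        dtr φ z'.1.1.1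
          (lρ φ hbase hcoc' U s W hsec' triv ⟨z'.1.1.2.down, hOmem z'.1 z'.2⟩)
          (by
            rw [lρ_pi φ hbase hcoc' U s W hsec' triv htriv]
            exact z'.1.2.symm) with hgdef
      have hgcont : Continuous g := by
        rw [hgdef]
        have h1cont : Continuous (fun z' : O =>
            (⟨(z'.1.1.1, lρ φ hbase hcoc' U s W hsec' triv
                ⟨z'.1.1.2.down, hOmem z'.1 z'.2⟩), by
              rw [lρ_pi φ hbase hcoc' U s W hsec' triv htriv]
              exact z'.1.2.symm⟩ : {q : Y × E // π q.1 = π (pE q.2)})) := by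
          apply Continuous.subtype_mk
          apply Continuous.prodMk
          · exact continuous_fst.comp (continuous_subtype_val.comp continuous_subtype_val)
          · apply (lρ_continuous φ hbase hcoc' U s W hsec' triv hUo hs hWo hπ_cont hpE).comp
            apply Continuous.subtype_mk
            exact continuous_uliftDown.comp
              (continuous_snd.comp (continuous_subtype_val.comp continuous_subtype_val))
        exact (dtr_continuous φ hpE).comp h1cont
      have hginv : ∀ z' : O, f (g z') = z'.1 := by
        intro z'
        apply Subtype.ext
        apply Prod.ext
        · exact dtr_pE φ hbase _ _ _
        · show ULift.up (dk φ hbase hcoc' (g z')) = z'.1.1.2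
          have h1 : dk φ hbase hcoc' (g z') = z'.1.1.2.down := by
            have hrel : drel φ (g z')
                (lρ φ hbase hcoc' U s W hsec' triv
                  ⟨z'.1.1.2.down, hOmem z'.1 z'.2⟩) :=
              ⟨by rw [dtr_pE φ hbase, lρ_pi φ hbase hcoc' U s W hsec' triv htriv]
                  exact z'.1.2.symm,
               dtr_congr_y φ (dtr_pE φ hbase _ _ _)⟩
            rw [dk_sound φ hbase hcoc' hrel,
              lρ_dk φ hbase hcoc' U s W hsec' triv htriv]
          rw [h1]
      have hagree : ∀ z' : O, F₀.symm z'.1 = g z' := by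
        intro z'
        apply hinj
        rw [hginv z']
        exact F₀.apply_symm_apply z'.1
      have hres : ContinuousOn F₀.symm O := by
        rw [continuousOn_iff_continuous_restrict]
        have hres2 : Set.domRestrict O F₀.symm = g := funext hagree
        rw [hres2]
        exact hgcont
      exact hres.continuousAt (hOopen.mem_nhds hzO)
    exact ⟨Homeomorph.mk F₀ hcont hcont_inv, fun e => rfl⟩
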